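/- Let F_q be a finite field of characteristic p, let x_0,…,x_{n−1} ∈ F_q be n distinct elements, let J ⊆ {0,…,n−1} with |J| = k, and let r ≤ ℓ be positive integers. Suppose y ∈ F_q^n satisfies y_i = 0 for all i ∈ J, and suppose the polynomials Q_0(x),…,Q_ℓ(x) ∈ F_q[x] with deg Q_ν ≤ d_ν satisfy the GSA interpolation constraints for y. Then for every ν with 0 ≤ ν ≤ r−1: if ν ∈ R_0 there exists W_ν(x) ∈ F_q[x] with deg W_ν ≤ d_ν − k(r−ν) − (n−k)(r−g(ν)) such that Q_ν(x) = W_ν(x)·P_J(x)^{r−ν}·P_{I∖J}(x)^{r−g(ν)}, and if ν ∉ R_0 there exists U_ν(x) ∈ F_q[x] with deg U_ν ≤ d_ν − k(r−ν) such that Q_ν(x) = U_ν(x)·P_J(x)^{r−ν}, where I = {0,…,n−1}. -/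

import Mathlib

open Polynomial

/-- `f` has degree at most `d`, where `d` is an integer (so `d < 0` forces `f = 0`). -/
def DegLE {F : Type*} [Field F] (f : F[X]) (d : ℤ) : Prop :=
  ∀ μ : ℕ, d < (μ : ℤ) → f.coeff μ = 0

/-- The Guruswami–Sudan interpolation constraints: for all `i` and all `s, t` with
`s + t < r`, `Σ_{ν=t}^{ℓ} C(ν,t)·y_i^{ν−t}·Σ_{μ≥s} C(μ,s)·x_i^{μ−s}·Q_{ν,μ} = 0`,
the inner sum being the `s`-th Hasse derivative of `Q ν` evaluated at `x i`. -/
def GSAConstraints {F : Type*} [Field F] {n : ℕ} (x y : Fin n → F)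
    (r ℓ : ℕ) (Q : ℕ → F[X]) : Prop :=
  ∀ i : Fin n, ∀ s t : ℕ, s + t < r →
    ∑ ν ∈ Finset.Icc t ℓ,
      (Nat.choose ν t : F) * y i ^ (ν - t) *
        ((Polynomial.hasseDeriv s (Q ν)).eval (x i)) = 0

/-- `P_S(x) = ∏_{i ∈ S} (x − x_i)`. -/
noncomputable def Ppoly {F : Type*} [Field F] {n : ℕ} (x : Fin n → F)
    (S : Finset (Fin n)) : F[X] :=
  ∏ i ∈ S, (X - C (x i))

/-- The degree bound `d_ν = r(n−ε₀) − ν(k−1) − 1` (as an integer). -/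
def degBound (r n ε₀ k ν : ℕ) : ℤ :=
  (r : ℤ) * ((n : ℤ) - (ε₀ : ℤ)) - (ν : ℤ) * ((k : ℤ) - 1) - 1

/-- `t0` is a zero column of the mod-`p` Pascal triangle with respect to `ℓ`:
`C(ν, t0) ≡ 0 (mod p)` for all `ν = t0+1, …, ℓ`. -/
def ZeroColumn (p ℓ t0 : ℕ) : Prop :=
  ∀ ν : ℕ, t0 < ν → ν ≤ ℓ → p ∣ Nat.choose ν t0

/-- `ν` is a zero column with resolvable spoilers of the mod-`p` Pascal triangle with
respect to `r` and `ℓ`: `ν < r` and every spoiler `t` of `ν` (i.e. `ν < t ≤ ℓ` with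
`C(t,ν) ≢ 0 (mod p)`) is itself a zero column with resolvable spoilers.  A zero column
(with `t0 < r`) has no spoilers and is the base case of the recursion; if no zero column
exists, no column satisfies this predicate. -/
def ZCRS (p r ℓ : ℕ) (ν : ℕ) : Prop :=
  ν < r ∧ ∀ t, ν < t → t ≤ ℓ → ¬ (p ∣ Nat.choose t ν) → ZCRS p r ℓ t
termination_by ℓ - ν
decreasing_by omega

/-- The set `S_ν` of spoilers of column `ν`: those `t` with `ν < t ≤ ℓ` and
`C(t,ν) ≢ 0 (mod p)`. -/
def spoilerSet (p ℓ ν : ℕ) : Finset ℕ :=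
  (Finset.Icc (ν + 1) ℓ).filter fun t => ¬ (p ∣ Nat.choose t ν)

/-- `g(ν) = max S_ν` if `S_ν ≠ ∅`, and `g(ν) = ν` otherwise. -/
def gval (p ℓ ν : ℕ) : ℕ :=
  if h : (spoilerSet p ℓ ν).Nonempty then (spoilerSet p ℓ ν).max' h else ν

/- ---------- auxiliary lemmas ---------- -/

lemma mem_spoilerSet {p ℓ ν t : ℕ} :
    t ∈ spoilerSet p ℓ ν ↔ ν < t ∧ t ≤ ℓ ∧ ¬ (p ∣ Nat.choose t ν) := by
  simp [spoilerSet, Finset.mem_filter, Finset.mem_Icc, Nat.succ_le_iff, and_assoc]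

lemma gval_ge (p ℓ ν : ℕ) : ν ≤ gval p ℓ ν := by
  unfold gval
  split
  · next h =>
    have := Finset.max'_mem _ h
    have := mem_spoilerSet.mp this
    omega
  · exact le_rfl

lemma gval_le_of_spoiler {p : ℕ} (hp : p.Prime) {ℓ ν t : ℕ}
    (h : t ∈ spoilerSet p ℓ ν) : gval p ℓ t ≤ gval p ℓ ν := by
  obtain ⟨hνt, htℓ, hnd⟩ := mem_spoilerSet.mp h
  have hSν : (spoilerSet p ℓ ν).Nonempty := ⟨t, h⟩
  have hgν : gval p ℓ ν = (spoilerSet p ℓ ν).max' hSν := by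
    unfold gval; rw [dif_pos hSν]
  rw [hgν]
  unfold gval
  split
  · next hSt =>
    apply Finset.le_max'
    set t' := (spoilerSet p ℓ t).max' hSt with ht'
    have hmem := Finset.max'_mem _ hSt
    obtain ⟨htt', ht'ℓ, hnd'⟩ := mem_spoilerSet.mp hmem
    refine mem_spoilerSet.mpr ⟨by omega, ht'ℓ, ?_⟩
    intro hdvd
    have hkey : Nat.choose t' t * Nat.choose t ν =
        Nat.choose t' ν * Nat.choose (t' - ν) (t - ν) :=
      Nat.choose_mul (by omega)
    have : p ∣ Nat.choose t' t * Nat.choose t ν := by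
      rw [hkey]; exact Dvd.dvd.mul_right hdvd _
    rcases (Nat.Prime.dvd_mul hp).mp this with h' | h'
    · exact hnd' h'
    · exact hnd h'
  · exact Finset.le_max' _ _ h

lemma ZCRS_def {p r ℓ ν : ℕ} : ZCRS p r ℓ ν ↔
    (ν < r ∧ ∀ t, ν < t → t ≤ ℓ → ¬ (p ∣ Nat.choose t ν) → ZCRS p r ℓ t) := by
  rw [ZCRS]

lemma gval_lt_r {p r ℓ ν : ℕ} (h : ZCRS p r ℓ ν) : gval p ℓ ν < r := by
  rw [ZCRS_def] at h
  unfold gval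
  split
  · next hS =>
    have hmem := Finset.max'_mem _ hS
    obtain ⟨h1, h2, h3⟩ := mem_spoilerSet.mp hmem
    exact ((ZCRS_def.mp (h.2 _ h1 h2 h3)).1)
  · exact h.1

lemma degLE_mono {F : Type*} [Field F] {f : F[X]} {d d' : ℤ}
    (h : DegLE f d) (hdd : d ≤ d') : DegLE f d' :=
  fun μ hμ => h μ (lt_of_le_of_lt hdd hμ)

lemma degLE_factor {F : Type*} [Field F] {f W g : F[X]} {d : ℤ}
    (hf : DegLE f d) (hg : g.Monic) (hfW : f = W * g) :
    DegLE W (d - (g.natDegree : ℤ)) := by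
  rcases eq_or_ne W 0 with rfl | hW
  · intro μ _; simp
  · have hf0 : f ≠ 0 := by
      rw [hfW]; exact mul_ne_zero hW hg.ne_zero
    have hdle : (f.natDegree : ℤ) ≤ d := by
      by_contra hcon
      push_neg at hcon
      exact hf0 (Polynomial.leadingCoeff_eq_zero.mp (hf f.natDegree hcon))
    have h2 : f.natDegree = W.natDegree + g.natDegree := by
      rw [hfW]
      exact Polynomial.natDegree_mul hW hg.ne_zero
    intro μ hμ
    by_contra hc
    have h1 : μ ≤ W.natDegree := le_natDegree_of_ne_zero hc
    have : (μ : ℤ) + g.natDegree ≤ d := by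
      calc (μ : ℤ) + g.natDegree ≤ (W.natDegree : ℤ) + g.natDegree := by
            exact_mod_cast add_le_add_left (Nat.cast_le.mpr h1) _
        _ = (f.natDegree : ℤ) := by exact_mod_cast h2.symm
        _ ≤ d := hdle
    omega

lemma pow_sub_dvd_of_hasse {F : Type*} [Field F] (f : F[X]) (a : F) (m : ℕ)
    (h : ∀ s < m, (Polynomial.hasseDeriv s f).eval a = 0) : (X - C a) ^ m ∣ f := by
  conv_rhs => rw [← Polynomial.sum_taylor_eq f a]
  rw [Polynomial.sum]
  apply Finset.dvd_sum
  intro i hi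
  by_cases him : m ≤ i
  · exact Dvd.dvd.mul_left (pow_dvd_pow _ him) _
  · exfalso
    apply Polynomial.mem_support_iff.mp hi
    rw [Polynomial.taylor_coeff]
    exact h i (by omega)

lemma prod_pow_dvd {F : Type*} [Field F] {n : ℕ} (x : Fin n → F)
    (hx : Function.Injective x) (f : F[X]) (e : Fin n → ℕ) (S : Finset (Fin n))
    (h : ∀ i ∈ S, ∀ s < e i, (Polynomial.hasseDeriv s f).eval (x i) = 0) :
    (∏ i ∈ S, (X - C (x i)) ^ e i) ∣ f := by
  apply Finset.prod_dvd_of_coprime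
  · intro a _ b _ hab
    exact (Polynomial.pairwise_coprime_X_sub_C hx hab).pow
  · intro i hi
    exact pow_sub_dvd_of_hasse _ _ _ (h i hi)

lemma Ppoly_monic {F : Type*} [Field F] {n : ℕ} (x : Fin n → F)
    (S : Finset (Fin n)) : (Ppoly x S).Monic :=
  monic_prod_of_monic _ _ fun i _ => monic_X_sub_C _

lemma Ppoly_natDegree {F : Type*} [Field F] {n : ℕ} (x : Fin n → F)
    (S : Finset (Fin n)) : (Ppoly x S).natDegree = S.card := by
  rw [Ppoly, Polynomial.natDegree_prod_of_monic _ _ fun i _ => monic_X_sub_C _]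
  simp

/-- combined re-encoding and Sierpinski prefactors: if `y` vanishes on
`J` with `|J| = k` and the `Q ν` satisfy the GSA interpolation constraints with degree
bounds `d_ν`, then for every `ν < r`: if `ν` is a zero column with resolvable spoilers,
`Q ν = W · P_J^(r−ν) · P_{I∖J}^(r−g(ν))` with
`deg W ≤ d_ν − k(r−ν) − (n−k)(r−g(ν))`; otherwise `Q ν = U · P_J^(r−ν)` with
`deg U ≤ d_ν − k(r−ν)`. -/
theorem combined_prefactors {F : Type*} [Field F] [Fintype F]
    {p : ℕ} (hp : p.Prime) [CharP F p] {n : ℕ}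
    (x : Fin n → F) (hx : Function.Injective x)
    (J : Finset (Fin n)) (r ℓ k ε₀ : ℕ) (hJ : J.card = k)
    (hr : 0 < r) (hrℓ : r ≤ ℓ)
    (y : Fin n → F) (hy : ∀ i ∈ J, y i = 0)
    (Q : ℕ → F[X])
    (hdeg : ∀ ν ≤ ℓ, DegLE (Q ν) (degBound r n ε₀ k ν))
    (hGSA : GSAConstraints x y r ℓ Q) :
    ∀ ν < r,
      (ZCRS p r ℓ ν → ∃ W : F[X],
        DegLE W (degBound r n ε₀ k ν - (k : ℤ) * ((r : ℤ) - (ν : ℤ)) -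
          ((n : ℤ) - (k : ℤ)) * ((r : ℤ) - (gval p ℓ ν : ℤ))) ∧
        Q ν = W * (Ppoly x J) ^ (r - ν) *
          (Ppoly x (Finset.univ \ J)) ^ (r - gval p ℓ ν)) ∧
      (¬ ZCRS p r ℓ ν → ∃ U : F[X],
        DegLE U (degBound r n ε₀ k ν - (k : ℤ) * ((r : ℤ) - (ν : ℤ))) ∧
        Q ν = U * (Ppoly x J) ^ (r - ν)) := by
  classical
  -- Lemma A: vanishing at points of J
  have lemA : ∀ ν, ν < r → ∀ i ∈ J, ∀ s, s + ν < r →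
      (Polynomial.hasseDeriv s (Q ν)).eval (x i) = 0 := by
    intro ν hν i hiJ s hs
    have hsum := hGSA i s ν hs
    rw [Finset.sum_eq_single ν (fun b hb hbν => by
        rw [hy i hiJ, zero_pow (by
          have := Finset.mem_Icc.mp hb
          omega), mul_zero, zero_mul])
      (fun hnot => absurd (Finset.mem_Icc.mpr ⟨le_rfl, by omega⟩) hnot)] at hsum
    simpa using hsum
  -- Lemma B: vanishing at all points for ZCRS columns
  have lemB : ∀ m : ℕ, ∀ ν, ℓ - ν < m → ZCRS p r ℓ ν → ∀ s, s + gval p ℓ ν < r →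
      ∀ i : Fin n, (Polynomial.hasseDeriv s (Q ν)).eval (x i) = 0 := by
    intro m
    induction m with
    | zero => intro ν h; omega
    | succ m ih =>
      intro ν hνm hZ s hs i
      have hZ' := ZCRS_def.mp hZ
      have hνr : ν < r := hZ'.1
      have hgν : ν ≤ gval p ℓ ν := gval_ge p ℓ ν
      have hsum := hGSA i s ν (by omega)
      rw [Finset.sum_eq_single ν (fun b hb hbν => by
        have hbmem := Finset.mem_Icc.mp hb
        have hνb : ν < b := by omega
        by_cases hdvd : p ∣ Nat.choose b ν
        · have : ((Nat.choose b ν : ℕ) : F) = 0 :=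
            (CharP.cast_eq_zero_iff F p _).mpr hdvd
          rw [this, zero_mul, zero_mul]
        · have hbsp : b ∈ spoilerSet p ℓ ν :=
            mem_spoilerSet.mpr ⟨hνb, hbmem.2, hdvd⟩
          have hbZ : ZCRS p r ℓ b := hZ'.2 b hνb hbmem.2 hdvd
          have hgb : gval p ℓ b ≤ gval p ℓ ν := gval_le_of_spoiler hp hbsp
          have : (Polynomial.hasseDeriv s (Q b)).eval (x i) = 0 :=
            ih b (by omega) hbZ s (by omega) i
          rw [this, mul_zero])
      (fun hnot => absurd (Finset.mem_Icc.mpr ⟨le_rfl, by omega⟩) hnot)] at hsum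
      simpa using hsum
  -- main argument
  intro ν hν
  have hνℓ : ν ≤ ℓ := by omega
  have hkn : k ≤ n := by
    have h := Finset.card_le_univ (α := Fin n) J
    rw [Fintype.card_fin, hJ] at h
    exact h
  constructor
  · -- ZCRS case
    intro hZ
    set g := gval p ℓ ν with hg
    have hgr : g < r := gval_lt_r hZ
    have hgν : ν ≤ g := gval_ge p ℓ ν
    set e : Fin n → ℕ := fun i => if i ∈ J then r - ν else r - g with he
    have hdvd : (∏ i ∈ Finset.univ, (X - C (x i)) ^ e i) ∣ Q ν := by
      apply prod_pow_dvd x hx _ e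
      intro i _ s hse
      by_cases hiJ : i ∈ J
      · exact lemA ν hν i hiJ s (by simp [he, hiJ] at hse; omega)
      · refine lemB (ℓ - ν + 1) ν (by omega) hZ s ?_ i
        simp [he, hiJ] at hse
        omega
    have hsplit : (∏ i ∈ Finset.univ, (X - C (x i)) ^ e i) =
        (Ppoly x J) ^ (r - ν) * (Ppoly x (Finset.univ \ J)) ^ (r - g) := by
      rw [← Finset.prod_sdiff (Finset.subset_univ J)]
      rw [mul_comm]
      congr 1
      · rw [Ppoly, ← Finset.prod_pow]
        exact Finset.prod_congr rfl fun i hi => by simp only [he, if_pos hi]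
      · rw [Ppoly, ← Finset.prod_pow]
        exact Finset.prod_congr rfl fun i hi => by
          simp only [he, if_neg (Finset.mem_sdiff.mp hi).2]
    rw [hsplit] at hdvd
    obtain ⟨W, hW⟩ := hdvd
    refine ⟨W, ?_, by rw [hW]; ring⟩
    have hmonic : ((Ppoly x J) ^ (r - ν) * (Ppoly x (Finset.univ \ J)) ^ (r - g)).Monic :=
      ((Ppoly_monic x J).pow _).mul ((Ppoly_monic x _).pow _)
    have hcard : (Finset.univ \ J).card = n - k := by
      rw [Finset.card_sdiff_of_subset (Finset.subset_univ J), Finset.card_univ, Fintype.card_fin, hJ]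
    have hD : ((Ppoly x J) ^ (r - ν) * (Ppoly x (Finset.univ \ J)) ^ (r - g)).natDegree
        = (r - ν) * k + (r - g) * (n - k) := by
      rw [Polynomial.Monic.natDegree_mul ((Ppoly_monic x J).pow _) ((Ppoly_monic x _).pow _),
        (Ppoly_monic x J).natDegree_pow, (Ppoly_monic x _).natDegree_pow,
        Ppoly_natDegree, Ppoly_natDegree, hJ, hcard]
    have hfac := degLE_factor (W := W) (hdeg ν hνℓ) hmonic (by rw [hW]; ring)
    refine degLE_mono hfac (le_of_eq ?_)
    rw [hD]
    have e1 : ((r - ν : ℕ) : ℤ) = (r : ℤ) - ν := by omega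
    have e2 : ((r - g : ℕ) : ℤ) = (r : ℤ) - g := by omega
    have e3 : ((n - k : ℕ) : ℤ) = (n : ℤ) - k := by omega
    push_cast
    rw [e1, e2, e3]
    ring
  · -- non-ZCRS case
    intro _
    have hdvd : (∏ i ∈ J, (X - C (x i)) ^ (r - ν)) ∣ Q ν := by
      apply prod_pow_dvd x hx _ (fun _ => r - ν)
      intro i hi s hse
      exact lemA ν hν i hi s (by omega)
    rw [Finset.prod_pow] at hdvd
    have hdvd' : (Ppoly x J) ^ (r - ν) ∣ Q ν := hdvd
    obtain ⟨U, hU⟩ := hdvd'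
    refine ⟨U, ?_, by rw [hU]; ring⟩
    have hmonic : ((Ppoly x J) ^ (r - ν)).Monic := (Ppoly_monic x J).pow _
    have hfac := degLE_factor (W := U) (hdeg ν hνℓ) hmonic (by rw [hU]; ring)
    refine degLE_mono hfac (le_of_eq ?_)
    rw [(Ppoly_monic x J).natDegree_pow, Ppoly_natDegree, hJ]
    have e1 : ((r - ν : ℕ) : ℤ) = (r : ℤ) - ν := by omega
    push_cast
    rw [e1]
    ring
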